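/- arXiv:2307.15869 — 2 statements merged into one kernel-verified Lean document; each statement's English description precedes it below -/
import Mathlib

section
/- Let X and Y be real locally convex topological vector spaces and let F : X ⇒ Y be a set-valued mapping whose graph gph(F) is convex and such that int(F(x)) ≠ ∅ for every x ∈ dom(F). Then sqri(gph(F)) = {(x,y) ∈ X × Y : x ∈ sqri(dom(F)) and y ∈ sqri(F(x))}. -/
open Pointwise Set

/-- Conic hull: `cone(A) = {λa : λ ≥ 0, a ∈ A}`. -/
def coneHull {Z : Type*} [AddCommGroup Z] [Module ℝ Z] (A : Set Z) : Set Z :=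
  {y | ∃ c : ℝ, 0 ≤ c ∧ ∃ a ∈ A, y = c • a}

/-- A set is a linear subspace if it underlies some `ℝ`-submodule. -/
def IsLinearSubspace {Z : Type*} [AddCommGroup Z] [Module ℝ Z] (S : Set Z) : Prop :=
  ∃ L : Submodule ℝ Z, (L : Set Z) = S

/-- Strong quasi-relative interior. -/
def sqri {Z : Type*} [AddCommGroup Z] [Module ℝ Z] [TopologicalSpace Z] (A : Set Z) : Set Z :=
  {x ∈ A | IsLinearSubspace (coneHull (A - {x})) ∧ IsClosed (coneHull (A - {x}))}

/-- Domain of a set-valued mapping. -/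
def svmDom {X Y : Type*} (F : X → Set Y) : Set X := {x | (F x).Nonempty}

/-- Graph of a set-valued mapping. -/
def svmGph {X Y : Type*} (F : X → Set Y) : Set (X × Y) := {p | p.2 ∈ F p.1}

lemma mem_coneHull_sub {Z : Type*} [AddCommGroup Z] [Module ℝ Z] {A : Set Z} {a v : Z} :
    v ∈ coneHull (A - {a}) ↔ ∃ c : ℝ, 0 ≤ c ∧ ∃ p ∈ A, v = c • (p - a) := by
  constructor
  · rintro ⟨c, hc, q, hq, rfl⟩
    rw [Set.mem_sub] at hq
    obtain ⟨p, hp, b, hb, rfl⟩ := hq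
    rw [Set.mem_singleton_iff] at hb
    exact ⟨c, hc, p, hp, by rw [hb]⟩
  · rintro ⟨c, hc, p, hp, rfl⟩
    exact ⟨c, hc, p - a, Set.sub_mem_sub hp rfl, rfl⟩

lemma coneHull_sub_add {Z : Type*} [AddCommGroup Z] [Module ℝ Z] {A : Set Z} {a : Z}
    (hA : Convex ℝ A) (ha : a ∈ A) {u v : Z}
    (hu : u ∈ coneHull (A - {a})) (hv : v ∈ coneHull (A - {a})) :
    u + v ∈ coneHull (A - {a}) := by
  rw [mem_coneHull_sub] at hu hv ⊢
  obtain ⟨c, hc, p, hp, rfl⟩ := hu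
  obtain ⟨d, hd, q, hq, rfl⟩ := hv
  by_cases h : c + d = 0
  · have hc0 : c = 0 := le_antisymm (by linarith) hc
    have hd0 : d = 0 := le_antisymm (by linarith) hd
    exact ⟨0, le_refl _, a, ha, by simp [hc0, hd0]⟩
  · have hr : 0 < c + d := lt_of_le_of_ne (by linarith) (Ne.symm h)
    refine ⟨c + d, le_of_lt hr, (c/(c+d)) • p + (d/(c+d)) • q,
      hA hp hq (div_nonneg hc hr.le) (div_nonneg hd hr.le) (by field_simp), ?_⟩
    have h1 : (c + d) • ((c/(c+d)) • p + (d/(c+d)) • q) = c • p + d • q := by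
      rw [smul_add, smul_smul, smul_smul, mul_div_cancel₀ _ h, mul_div_cancel₀ _ h]
    have h2 : (c + d) • ((c/(c+d)) • p + (d/(c+d)) • q - a) = c • p + d • q - (c+d) • a := by
      rw [smul_sub, h1]
    rw [h2, smul_sub, smul_sub, add_smul]
    abel

section TVS
variable {Z : Type*} [AddCommGroup Z] [Module ℝ Z] [TopologicalSpace Z]
    [IsTopologicalAddGroup Z] [ContinuousSMul ℝ Z]

lemma exists_pos_smul_mem {s : Set Z} {y : Z}
    (hy : y ∈ interior s) (w : Z) : ∃ t : ℝ, 0 < t ∧ y + t • w ∈ s := by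
  have hc : Continuous fun t : ℝ => y + t • w := by continuity
  have hmem : (fun t : ℝ => y + t • w) ⁻¹' s ∈ nhds (0:ℝ) := by
    apply hc.continuousAt.preimage_mem_nhds
    simpa using mem_interior_iff_mem_nhds.1 hy
  obtain ⟨t, hts, ht0⟩ := Filter.nonempty_of_mem
    (Filter.inter_mem (nhdsWithin_le_nhds hmem) self_mem_nhdsWithin (f := nhdsWithin 0 (Set.Ioi 0)))
  exact ⟨t, ht0, hts⟩

lemma mem_interior_of_combo {s : Set Z} (hs : Convex ℝ s) {y y' y'' : Z} {c : ℝ}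
    (hy' : y' ∈ interior s) (hy'' : y'' ∈ s) (hc : 0 ≤ c)
    (heq : y - y' = c • (y'' - y)) : y ∈ interior s := by
  have h1 : (0:ℝ) < 1/(1+c) := by positivity
  have h2 : (0:ℝ) ≤ c/(1+c) := by positivity
  have h3 : 1/(1+c) + c/(1+c) = 1 := by field_simp
  have key : (1/(1+c)) • y' + (c/(1+c)) • y'' = y := by
    have hne : (1:ℝ) + c ≠ 0 := by positivity
    have h4 : (1+c) • y = y' + c • y'' := by
      rw [smul_sub] at heq
      rw [add_smul, one_smul]
      have h5 : y - y' + c • y = c • y'' := by rw [heq]; abel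
      linear_combination (norm := module) h5
    calc (1/(1+c)) • y' + (c/(1+c)) • y''
        = (1/(1+c)) • (y' + c • y'') := by rw [smul_add, smul_smul]; ring_nf
      _ = (1/(1+c)) • ((1+c) • y) := by rw [h4]
      _ = y := by rw [smul_smul]; field_simp; rw [one_smul]
  rw [← key]
  exact hs.combo_interior_self_mem_interior hy' hy'' h1 h2 h3

lemma sqri_eq_interior {s : Set Z} (hs : Convex ℝ s) (hne : (interior s).Nonempty) :
    sqri s = interior s := by
  have huniv : ∀ y ∈ interior s, coneHull (s - {y}) = univ := by
    intro y hy
    rw [eq_univ_iff_forall]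
    intro v
    obtain ⟨t, ht, hts⟩ := exists_pos_smul_mem hy v
    exact mem_coneHull_sub.2 ⟨1/t, by positivity, y + t • v, hts, by
      rw [add_sub_cancel_left, smul_smul]; field_simp; rw [one_smul]⟩
  ext y
  constructor
  · rintro ⟨hy, ⟨L, hL⟩, -⟩
    obtain ⟨y', hy'⟩ := hne
    have h1 : y' - y ∈ coneHull (s - {y}) :=
      mem_coneHull_sub.2 ⟨1, zero_le_one, y', interior_subset hy', by rw [one_smul]⟩
    have h2 : y - y' ∈ coneHull (s - {y}) := by
      rw [← hL] at h1 ⊢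
      simpa using L.neg_mem h1
    obtain ⟨c, hc, y'', hy'', heq⟩ := mem_coneHull_sub.1 h2
    exact mem_interior_of_combo hs hy' hy'' hc heq
  · intro hy
    exact ⟨interior_subset hy, ⟨⊤, by rw [Submodule.top_coe, huniv y hy]⟩,
      by rw [huniv y hy]; exact isClosed_univ⟩

end TVS

section Main
variable {X Y : Type*}
    [AddCommGroup X] [Module ℝ X] [TopologicalSpace X]
    [IsTopologicalAddGroup X] [ContinuousSMul ℝ X]
    [AddCommGroup Y] [Module ℝ Y] [TopologicalSpace Y]
    [IsTopologicalAddGroup Y] [ContinuousSMul ℝ Y]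

lemma slice_convex {F : X → Set Y} (hconv : Convex ℝ (svmGph F)) (x : X) :
    Convex ℝ (F x) := by
  intro y1 h1 y2 h2 a b ha hb hab
  have h := hconv (show ((x,y1) : X × Y) ∈ svmGph F from h1)
    (show ((x,y2) : X × Y) ∈ svmGph F from h2) ha hb hab
  have he : a • ((x,y1) : X × Y) + b • (x,y2) = (x, a • y1 + b • y2) := by
    rw [Prod.smul_mk, Prod.smul_mk, Prod.mk_add_mk, ← add_smul, hab, one_smul]
  rw [he] at h
  exact h

/-- Product formula for the conic hull of the shifted graph. -/
lemma cone_gph_eq {F : X → Set Y} (hconv : Convex ℝ (svmGph F)) {x : X} {y : Y}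
    (hxy : y ∈ F x) (hy : y ∈ interior (F x)) :
    coneHull (svmGph F - {((x,y) : X × Y)}) =
      {p : X × Y | p.1 ∈ coneHull (svmDom F - {x})} := by
  ext ⟨u, v⟩
  constructor
  · rw [mem_coneHull_sub]
    rintro ⟨c, hc, ⟨x', y'⟩, hp, heq⟩
    have hu : u = c • (x' - x) := by
      have := congrArg Prod.fst heq
      simpa using this
    exact mem_coneHull_sub.2 ⟨c, hc, x', ⟨y', hp⟩, hu⟩
  · intro hu
    obtain ⟨c, hc, x', hx', hueq⟩ := mem_coneHull_sub.1 hu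
    obtain ⟨y', hy'⟩ := hx'
    have m1 : ((u, c • (y' - y)) : X × Y) ∈ coneHull (svmGph F - {((x,y) : X × Y)}) :=
      mem_coneHull_sub.2 ⟨c, hc, (x', y'), hy', by
        rw [Prod.mk_sub_mk, Prod.smul_mk, Prod.mk.injEq]
        exact ⟨hueq, rfl⟩⟩
    set w := v - c • (y' - y) with hw
    obtain ⟨t, ht, hts⟩ := exists_pos_smul_mem hy w
    have m2 : ((0, w) : X × Y) ∈ coneHull (svmGph F - {((x,y) : X × Y)}) :=
      mem_coneHull_sub.2 ⟨1/t, by positivity, (x, y + t • w),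
        (show (y + t • w) ∈ F x from hts), by
        rw [Prod.mk_sub_mk, Prod.smul_mk, Prod.mk.injEq]
        constructor
        · rw [sub_self, smul_zero]
        · rw [add_sub_cancel_left, smul_smul]; field_simp; rw [one_smul]⟩
    have := coneHull_sub_add hconv (show ((x,y) : X × Y) ∈ svmGph F from hxy) m1 m2
    have hsum : ((u, c • (y' - y)) : X × Y) + (0, w) = (u, v) := by
      rw [Prod.mk_add_mk, add_zero, hw]
      congr 1
      abel
    rwa [hsum] at this

end Main

theorem stmt13 {X Y : Type*}
    [AddCommGroup X] [Module ℝ X] [TopologicalSpace X]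
    [IsTopologicalAddGroup X] [ContinuousSMul ℝ X] [LocallyConvexSpace ℝ X]
    [AddCommGroup Y] [Module ℝ Y] [TopologicalSpace Y]
    [IsTopologicalAddGroup Y] [ContinuousSMul ℝ Y] [LocallyConvexSpace ℝ Y]
    (F : X → Set Y) (hconv : Convex ℝ (svmGph F))
    (hint : ∀ x ∈ svmDom F, (interior (F x)).Nonempty) :
    sqri (svmGph F) = {p : X × Y | p.1 ∈ sqri (svmDom F) ∧ p.2 ∈ sqri (F p.1)} := by
  ext ⟨x, y⟩
  simp only [Set.mem_setOf_eq]
  constructor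
  · rintro ⟨hxy, ⟨L, hL⟩, hcl⟩
    have hxD : x ∈ svmDom F := ⟨y, hxy⟩
    obtain ⟨y', hy'⟩ := hint x hxD
    -- step 1 : y ∈ interior (F x)
    have hyint : y ∈ interior (F x) := by
      by_cases hyy : y = y'
      · rw [hyy]; exact hy'
      · have h1 : ((0, y' - y) : X × Y) ∈ coneHull (svmGph F - {((x,y) : X × Y)}) :=
          mem_coneHull_sub.2 ⟨1, zero_le_one, (x, y'), (show y' ∈ F x from interior_subset hy'), by
            rw [Prod.mk_sub_mk, Prod.smul_mk, one_smul, one_smul, sub_self]⟩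
        have h2 : ((0, y - y') : X × Y) ∈ coneHull (svmGph F - {((x,y) : X × Y)}) := by
          rw [← hL] at h1 ⊢
          have := L.neg_mem h1
          simpa using this
        obtain ⟨c, hc, ⟨x'', y''⟩, hp'', heq⟩ := mem_coneHull_sub.1 h2
        have hfst : (0 : X) = c • (x'' - x) := by simpa using congrArg Prod.fst heq
        have hsnd : y - y' = c • (y'' - y) := by simpa using congrArg Prod.snd heq
        have hc0 : c ≠ 0 := by
          intro h0
          rw [h0, zero_smul, sub_eq_zero] at hsnd
          exact hyy hsnd
        have hx'' : x'' = x := by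
          rcases smul_eq_zero.1 hfst.symm with h | h
          · exact absurd h hc0
          · exact sub_eq_zero.1 h
        rw [hx''] at hp''
        exact mem_interior_of_combo (slice_convex hconv x) hy' hp'' hc hsnd
    have hprod := cone_gph_eq hconv hxy hyint
    constructor
    · -- x ∈ sqri (svmDom F)
      have hCset : coneHull (svmDom F - {x}) =
          (fun u : X => ((u, (0:Y)) : X × Y)) ⁻¹' (coneHull (svmGph F - {((x,y) : X × Y)})) := by
        ext u
        rw [Set.mem_preimage, hprod]
        rfl
      refine ⟨hxD, ⟨Submodule.comap (LinearMap.inl ℝ X Y) L, ?_⟩, ?_⟩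
      · ext u
        simp only [Submodule.mem_comap, LinearMap.mem_range, SetLike.mem_coe,
          LinearMap.inl_apply]
        rw [← SetLike.mem_coe, hL, hprod]
        rfl
      · rw [hCset]
        exact hcl.preimage (Continuous.prodMk continuous_id continuous_const)
    · -- y ∈ sqri (F x)
      rw [sqri_eq_interior (slice_convex hconv x) ⟨y', hy'⟩]
      exact hyint
  · rintro ⟨⟨hxD, ⟨LD, hLD⟩, hclD⟩, hy⟩
    have hFconv := slice_convex hconv x
    have hne := hint x hxD
    rw [sqri_eq_interior hFconv hne] at hy
    have hxy : y ∈ F x := interior_subset hy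
    have hprod := cone_gph_eq hconv hxy hy
    refine ⟨hxy, ⟨Submodule.comap (LinearMap.fst ℝ X Y) LD, ?_⟩, ?_⟩
    · ext p
      simp only [Submodule.mem_comap, SetLike.mem_coe, LinearMap.fst_apply]
      rw [← SetLike.mem_coe, hLD, hprod]
      rfl
    · rw [hprod]
      have : ({p : X × Y | p.1 ∈ coneHull (svmDom F - {x})} : Set (X × Y)) =
          Prod.fst ⁻¹' (coneHull (svmDom F - {x})) := rfl
      rw [this]
      exact hclD.preimage continuous_fst
end

section
/- Let X be a real locally convex topological vector space, let Ω ⊂ X be a quasi-nearly convex set, and let x̄ ∈ Ω. Then x̄ ∉ qri(Ω) if and only if the sets {x̄} and Ω can be properly separated by a closed hyperplane, i.e., there exists a nonzero x* ∈ X* such that ⟨x*, x⟩ ≤ ⟨x*, x̄⟩ for all x ∈ Ω and ⟨x*, x̂⟩ < ⟨x*, x̄⟩ for some x̂ ∈ Ω. -/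
open Pointwise Set

/-- Quasi-relative interior. -/
def qri {Z : Type*} [AddCommGroup Z] [Module ℝ Z] [TopologicalSpace Z] (A : Set Z) : Set Z :=
  {x ∈ A | IsLinearSubspace (closure (coneHull (A - {x})))}

/-- A set is quasi-nearly convex if it is squeezed between a convex set with
nonempty quasi-relative interior and its closure. -/
def QuasiNearlyConvex {Z : Type*} [AddCommGroup Z] [Module ℝ Z] [TopologicalSpace Z]
    (A : Set Z) : Prop :=
  ∃ C : Set Z, Convex ℝ C ∧ (qri C).Nonempty ∧ C ⊆ A ∧ A ⊆ closure C

lemma coneHull_mono {Z : Type*} [AddCommGroup Z] [Module ℝ Z] {A B : Set Z} (h : A ⊆ B) :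
    coneHull A ⊆ coneHull B := by
  rintro x ⟨c, hc, a, ha, rfl⟩
  exact ⟨c, hc, a, h ha, rfl⟩

lemma subset_coneHull {Z : Type*} [AddCommGroup Z] [Module ℝ Z] (A : Set Z) :
    A ⊆ coneHull A := fun a ha => ⟨1, zero_le_one, a, ha, (one_smul ℝ a).symm⟩

lemma smul_mem_coneHull {Z : Type*} [AddCommGroup Z] [Module ℝ Z] {A : Set Z} {c : ℝ}
    (hc : 0 ≤ c) {x : Z} (hx : x ∈ coneHull A) : c • x ∈ coneHull A := by
  obtain ⟨d, hd, a, ha, rfl⟩ := hx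
  exact ⟨c * d, mul_nonneg hc hd, a, ha, smul_smul c d a⟩

lemma convex_coneHull {Z : Type*} [AddCommGroup Z] [Module ℝ Z] {A : Set Z}
    (hA : Convex ℝ A) : Convex ℝ (coneHull A) := by
  rintro x ⟨c1, hc1, a1, ha1, rfl⟩ y ⟨c2, hc2, a2, ha2, rfl⟩ t s ht hs hts
  by_cases hr : t * c1 + s * c2 = 0
  · have h1 : t * c1 = 0 := by nlinarith [mul_nonneg ht hc1, mul_nonneg hs hc2]
    have h2 : s * c2 = 0 := by nlinarith [mul_nonneg ht hc1, mul_nonneg hs hc2]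
    refine ⟨0, le_refl 0, a1, ha1, ?_⟩
    rw [smul_smul, smul_smul, h1, h2]
    simp
  · have hr' : 0 < t * c1 + s * c2 :=
      lt_of_le_of_ne (by positivity) (Ne.symm hr)
    set r := t * c1 + s * c2 with hrdef
    refine ⟨r, le_of_lt hr', (t * c1 / r) • a1 + (s * c2 / r) • a2,
      hA ha1 ha2 (by positivity) (by positivity) (by field_simp; exact hrdef.symm), ?_⟩
    have hkey : r • ((t * c1 / r) • a1 + (s * c2 / r) • a2)
        = (t * c1) • a1 + (s * c2) • a2 := by
      rw [smul_add, smul_smul, smul_smul, mul_div_cancel₀ _ (ne_of_gt hr'),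
        mul_div_cancel₀ _ (ne_of_gt hr')]
    rw [hkey, smul_smul, smul_smul]

theorem stmt15 {X : Type*} [AddCommGroup X] [Module ℝ X] [TopologicalSpace X]
    [IsTopologicalAddGroup X] [ContinuousSMul ℝ X] [LocallyConvexSpace ℝ X]
    (Ω : Set X) (h : QuasiNearlyConvex Ω) (xbar : X) (hxbar : xbar ∈ Ω) :
    xbar ∉ qri Ω ↔ ∃ f : X →L[ℝ] ℝ, f ≠ 0 ∧ (∀ x ∈ Ω, f x ≤ f xbar) ∧
      ∃ xhat ∈ Ω, f xhat < f xbar := by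
  constructor
  · -- forward direction
    intro hnq
    obtain ⟨C, hCconv, _, hCΩ, hΩcl⟩ := h
    set K : Set X := closure (coneHull (Ω - {xbar})) with hKdef
    -- K equals closure of coneHull (C - {xbar})
    have hsub1 : coneHull (C - {xbar}) ⊆ coneHull (Ω - {xbar}) :=
      coneHull_mono (sub_subset_sub hCΩ Subset.rfl)
    have hsub2 : coneHull (Ω - {xbar}) ⊆ closure (coneHull (C - {xbar})) := by
      rintro y ⟨c, hc, a, ha, rfl⟩
      obtain ⟨b, hb, x0, hx0, rfl⟩ := ha
      have hx0' : x0 = xbar := hx0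
      subst x0
      have hb' : b ∈ closure C := hΩcl hb
      have hcont : Continuous (fun z : X => c • (z - xbar)) :=
        (continuous_id.sub continuous_const).const_smul c
      have hmaps : MapsTo (fun z : X => c • (z - xbar)) C (coneHull (C - {xbar})) := by
        intro z hz
        exact ⟨c, hc, z - xbar, sub_mem_sub hz rfl, rfl⟩
      simpa using map_mem_closure hcont hb' hmaps
    have hKeq : K = closure (coneHull (C - {xbar})) := by
      apply subset_antisymm
      · exact closure_minimal hsub2 isClosed_closure
      · exact closure_mono hsub1
    have hKconv : Convex ℝ K := by
      rw [hKeq]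
      exact (convex_coneHull (hCconv.sub (convex_singleton xbar))).closure
    have hKclosed : IsClosed K := isClosed_closure
    have h0mem : (0 : X) ∈ coneHull (Ω - {xbar}) :=
      ⟨0, le_refl 0, xbar - xbar, sub_mem_sub hxbar rfl, (zero_smul ℝ _).symm⟩
    have hK0 : (0 : X) ∈ K := subset_closure h0mem
    have hKsmul : ∀ c : ℝ, 0 ≤ c → ∀ k ∈ K, c • k ∈ K := by
      intro c hc k hk
      exact map_mem_closure (continuous_const_smul c) hk
        (fun z hz => smul_mem_coneHull hc hz)
    -- K is not a linear subspace
    have hKnot : ¬ IsLinearSubspace K := fun hL => hnq ⟨hxbar, hL⟩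
    -- find v ∈ K with -v ∉ K
    have hKadd : ∀ a ∈ K, ∀ b ∈ K, a + b ∈ K := by
      intro a ha b hb
      have hhalf : (1/2 : ℝ) • a + (1/2 : ℝ) • b ∈ K :=
        hKconv ha hb (by norm_num) (by norm_num) (by norm_num)
      have := hKsmul 2 (by norm_num) _ hhalf
      rw [smul_add, smul_smul, smul_smul] at this
      norm_num at this
      exact this
    obtain ⟨v, hvK, hvnK⟩ : ∃ v ∈ K, -v ∉ K := by
      by_contra hcon
      push_neg at hcon
      apply hKnot
      refine ⟨{ carrier := K
                add_mem' := fun ha hb => hKadd _ ha _ hb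
                zero_mem' := hK0
                smul_mem' := ?_ }, rfl⟩
      intro c x hx
      rcases le_or_gt 0 c with hc | hc
      · exact hKsmul c hc x hx
      · have : c • x = (-c) • (-x) := by rw [neg_smul, smul_neg, neg_neg]
        rw [this]
        exact hKsmul (-c) (by linarith) _ (hcon x hx)
    obtain ⟨f, u, hfK, hfu⟩ := geometric_hahn_banach_closed_point hKconv hKclosed hvnK
    have hu0 : (0 : ℝ) < u := by simpa using hfK 0 hK0
    -- f ≤ 0 on K
    have hfle : ∀ k ∈ K, f k ≤ 0 := by
      intro k hk
      by_contra hpos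
      push_neg at hpos
      have ht : (0 : ℝ) ≤ u / f k + 1 := by positivity
      have := hfK _ (hKsmul _ ht k hk)
      rw [map_smul] at this
      have : (u / f k + 1) * f k < u := this
      rw [add_mul, div_mul_cancel₀ _ (ne_of_gt hpos), one_mul] at this
      linarith
    have hfv : f v < 0 := by
      have : u < f (-v) := hfu
      rw [map_neg] at this
      linarith
    refine ⟨f, ?_, ?_, ?_⟩
    · intro hf0
      rw [hf0] at hfv
      simp at hfv
    · intro x hx
      have : f (x - xbar) ≤ 0 :=
        hfle _ (subset_closure (subset_coneHull _ (sub_mem_sub hx rfl)))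
      rw [map_sub] at this
      linarith
    · -- strict inequality from v in the closure
      have hvmem : v ∈ closure (coneHull (Ω - {xbar})) := hvK
      have hopen : IsOpen {y : X | f y < 0} := isOpen_lt f.continuous continuous_const
      obtain ⟨y, hy1, hy2⟩ :=
        mem_closure_iff.mp hvmem _ hopen hfv
      obtain ⟨c, hc, a, ha, rfl⟩ := hy2
      obtain ⟨b, hb, x0, hx0, rfl⟩ := ha
      have hx0' : x0 = xbar := hx0
      subst x0
      refine ⟨b, hb, ?_⟩
      have hy1' : c * (f b - f xbar) < 0 := by
        have := hy1
        simp only [mem_setOf_eq, map_smul, map_sub, smul_eq_mul] at this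
        linarith [this]
      by_contra hge
      push_neg at hge
      nlinarith
  · -- reverse direction
    rintro ⟨f, hf0, hle, xhat, hxhat, hlt⟩ ⟨_, L, hL⟩
    -- coneHull (Ω - {xbar}) ⊆ {f ≤ 0}, a closed set
    have hsub : coneHull (Ω - {xbar}) ⊆ {y : X | f y ≤ 0} := by
      rintro y ⟨c, hc, a, ha, rfl⟩
      obtain ⟨b, hb, x0, hx0, rfl⟩ := ha
      have hx0' : x0 = xbar := hx0
      subst x0
      simp only [mem_setOf_eq, map_smul, map_sub, smul_eq_mul]
      have := hle b hb
      nlinarith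
    have hclosed : IsClosed {y : X | f y ≤ 0} := isClosed_le f.continuous continuous_const
    have hKsub : closure (coneHull (Ω - {xbar})) ⊆ {y : X | f y ≤ 0} :=
      closure_minimal hsub hclosed
    have hmem : xhat - xbar ∈ closure (coneHull (Ω - {xbar})) :=
      subset_closure (subset_coneHull _ (sub_mem_sub hxhat rfl))
    have hmemneg : -(xhat - xbar) ∈ closure (coneHull (Ω - {xbar})) := by
      rw [← hL] at hmem ⊢
      exact neg_mem hmem
    have := hKsub hmemneg
    simp only [mem_setOf_eq, map_neg, map_sub] at this
    linarith
end
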